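/- Let G be a group with elements x₁, x₂, x₃ generating a free subgroup of rank 3, let φ₁, φ₂ be a poison subgroup of Aut(G) with respect to x₁, x₂, x₃, and let αᵢ denote conjugation by xᵢ for i = 1,2,3. If a nontrivial reduced word w(φ₁,φ₂) lies in ⟨α₁, α₂, α₃⟩, then w(φ₁,φ₂) = id. -/

import Mathlib

/-- With `⟨φ₁,φ₂⟩` a poison subgroup of `Aut(G)` with respect to
`x₁,x₂,x₃`, and `αᵢ` conjugation by `xᵢ`, any word in `φ₁, φ₂` lying in
`⟨α₁, α₂, α₃⟩` is the identity automorphism. -/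
theorem stmt3 {G : Type} [Group G] (x : Fin 3 → G)
    (hx : Function.Injective (FreeGroup.lift x))
    (φ : Fin 2 → MulAut G)
    (hfix : ∀ i j : Fin 2, φ i (x j.castSucc) = x j.castSucc)
    (hx3 : ∀ i : Fin 2, φ i (x 2) = x 2 * x i.castSucc)
    (w : FreeGroup (Fin 2))
    (hw : FreeGroup.lift φ w ∈
      Subgroup.closure (Set.range fun i : Fin 3 => MulAut.conj (x i))) :
    FreeGroup.lift φ w = 1 := by
  classical
  have hpo : ∀ i : Fin 2, (pure i : FreeGroup (Fin 2)) = FreeGroup.of i := fun _ => rfl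
  -- Claim A: any word in the φ's fixes x₀ and x₁
  have fixA : ∀ (v : FreeGroup (Fin 2)) (j : Fin 2),
      FreeGroup.lift φ v (x j.castSucc) = x j.castSucc := by
    intro v j
    induction v using FreeGroup.induction_on with
    | C1 => simp
    | of i => simp only [hpo, FreeGroup.lift_apply_of]; exact hfix i j
    | inv_of i h =>
      simp only [hpo, map_inv, FreeGroup.lift_apply_of] at h ⊢
      conv_lhs => rw [← h]
      simp
    | mul a b ha hb =>
      rw [map_mul, MulAut.mul_apply, hb, ha]
  -- consequence: any word in the φ's fixes anything in the subgroup ⟨x₀, x₁⟩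
  have fixU : ∀ (v w' : FreeGroup (Fin 2)),
      FreeGroup.lift φ v (FreeGroup.lift x (FreeGroup.map Fin.castSucc w')) =
        FreeGroup.lift x (FreeGroup.map Fin.castSucc w') := by
    intro v w'
    induction w' using FreeGroup.induction_on with
    | C1 => simp
    | of j =>
      simp only [hpo, FreeGroup.map.of, FreeGroup.lift_apply_of]
      exact fixA v j
    | inv_of j h =>
      simp only [hpo, map_inv] at h ⊢
      rw [h]
    | mul a b ha hb =>
      simp only [map_mul] at ha hb ⊢
      rw [ha, hb]
  -- Claim B: action on x₂
  have clB : ∀ v : FreeGroup (Fin 2),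
      FreeGroup.lift φ v (x 2) = x 2 * FreeGroup.lift x (FreeGroup.map Fin.castSucc v) := by
    intro v
    induction v using FreeGroup.induction_on with
    | C1 => simp
    | of i =>
      simp only [hpo, FreeGroup.map.of, FreeGroup.lift_apply_of]
      exact hx3 i
    | inv_of i h =>
      simp only [hpo, map_inv, FreeGroup.map.of, FreeGroup.lift_apply_of] at h ⊢
      apply (φ i).injective
      rw [MulAut.apply_inv_self, map_mul, map_inv, hx3 i, hfix i i]
      group
    | mul a b ha hb =>
      rw [map_mul, MulAut.mul_apply, hb, map_mul, ha, fixU a b, map_mul, map_mul, mul_assoc]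
  -- extract g = lift x v with conj g = lift φ w
  have hw' : FreeGroup.lift φ w ∈
      Subgroup.map (MulAut.conj : G →* MulAut G) (Subgroup.closure (Set.range x)) := by
    rw [MonoidHom.map_closure]
    have : ((MulAut.conj : G →* MulAut G) '' Set.range x)
        = Set.range fun i : Fin 3 => MulAut.conj (x i) := by
      rw [← Set.range_comp]; rfl
    rw [this]; exact hw
  obtain ⟨g, hg, hgw⟩ := hw'
  rw [← FreeGroup.range_lift_eq_closure] at hg
  obtain ⟨v, rfl⟩ := hg
  -- relations in G
  have h0 : FreeGroup.lift φ w (x ((0 : Fin 2).castSucc)) = x ((0 : Fin 2).castSucc) := fixA w 0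
  set uF := FreeGroup.map Fin.castSucc w with huFdef
  have e0 : FreeGroup.lift x v * x ((0 : Fin 2).castSucc)
      = x ((0 : Fin 2).castSucc) * FreeGroup.lift x v := by
    have h := congrArg (fun e : MulAut G => e (x ((0 : Fin 2).castSucc))) hgw
    simp only [MulAut.conj_apply, h0] at h
    exact mul_inv_eq_iff_eq_mul.mp h
  have e2 : FreeGroup.lift x v * x 2
      = x 2 * FreeGroup.lift x uF * FreeGroup.lift x v := by
    have h := congrArg (fun e : MulAut G => e (x 2)) hgw
    simp only [MulAut.conj_apply, clB w] at h
    rw [← huFdef] at h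
    have := mul_inv_eq_iff_eq_mul.mp h
    rw [this, mul_assoc]
  -- pull back to the free group on three generators
  have E0 : v * FreeGroup.of ((0 : Fin 2).castSucc) = FreeGroup.of ((0 : Fin 2).castSucc) * v :=
    hx (by simpa [map_mul, FreeGroup.lift_apply_of] using e0)
  have E2 : v * FreeGroup.of 2 = FreeGroup.of 2 * uF * v :=
    hx (by simpa [map_mul, FreeGroup.lift_apply_of] using e2)
  -- retraction killing the third generator
  set r : Fin 3 → Fin 3 := ![0, 1, 0] with hr
  have hr0 : r ((0 : Fin 2).castSucc) = 0 := rfl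
  have hr2 : r 2 = 0 := rfl
  have K0 := congrArg (FreeGroup.map r) E0
  have K2 := congrArg (FreeGroup.map r) E2
  simp only [map_mul, FreeGroup.map.of, hr0, hr2] at K0 K2
  have hu1 : FreeGroup.map r uF = 1 := by
    have h := K0.symm.trans K2
    have h' := mul_right_cancel h
    exact left_eq_mul.mp h'
  have hruF : FreeGroup.map r uF = uF := by
    rw [huFdef, FreeGroup.map.comp]
    have : r ∘ Fin.castSucc = (Fin.castSucc : Fin 2 → Fin 3) := by
      funext j; fin_cases j <;> rfl
    rw [this]
  have huF : uF = 1 := hruF.symm.trans hu1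
  -- recover w = 1
  have hwone : w = 1 := by
    have h := congrArg (FreeGroup.map (![0, 1, 0] : Fin 3 → Fin 2)) huF
    rw [huFdef, FreeGroup.map.comp] at h
    have hsc : (![0, 1, 0] : Fin 3 → Fin 2) ∘ Fin.castSucc = id := by
      funext j; fin_cases j <;> rfl
    rw [hsc] at h
    simpa using h
  rw [hwone, map_one]
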